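/- Let 𝔄 be a strictly semi-transitive subalgebra of L(X), where X is a complex Banach space. If 𝔄 is transitive, then 𝔄 is dense in L(X) in the weak operator topology. -/

import Mathlib

open Metric Set Finset

set_option linter.unusedSectionVars false
set_option maxHeartbeats 1000000

namespace SST12

variable {X : Type*} [NormedAddCommGroup X] [NormedSpace ℂ X] [CompleteSpace X]
variable (𝔅 : NonUnitalSubalgebra ℂ (X →L[ℂ] X))

def E (n : ℕ) (y : X) : Set X := {w | ∃ B ∈ 𝔅, ‖B‖ ≤ (n : ℝ) ∧ B y = w}

def H (n : ℕ) : Set (X × X) := {p | p.2 ∈ closure (E 𝔅 n p.1)}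

lemma isClosed_H (n : ℕ) : IsClosed (H 𝔅 n) := by
  refine isClosed_of_closure_subset ?_
  intro p hp
  rw [H, mem_setOf_eq, Metric.mem_closure_iff]
  intro ε hε
  set δ : ℝ := min (ε / (2 * (n + 1))) (ε / 4) with hδdef
  have hδ : 0 < δ := lt_min (by positivity) (by positivity)
  obtain ⟨q, hq, hdq⟩ := Metric.mem_closure_iff.1 hp δ hδ
  obtain ⟨w, ⟨B, hB, hBn, hBy⟩, hw⟩ := Metric.mem_closure_iff.1 hq (ε / 4) (by positivity)
  refine ⟨B p.1, ⟨B, hB, hBn, rfl⟩, ?_⟩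
  have h1 : dist p.1 q.1 < δ := lt_of_le_of_lt (by rw [Prod.dist_eq]; exact le_max_left _ _) hdq
  have h2 : dist p.2 q.2 < δ := lt_of_le_of_lt (by rw [Prod.dist_eq]; exact le_max_right _ _) hdq
  have h3 : dist w (B p.1) ≤ (n : ℝ) * δ := by
    rw [← hBy, dist_eq_norm, ← map_sub]
    calc ‖B (q.1 - p.1)‖ ≤ ‖B‖ * ‖q.1 - p.1‖ := B.le_opNorm _
      _ ≤ (n : ℝ) * δ := by
          have : ‖q.1 - p.1‖ ≤ δ := by rw [← dist_eq_norm, dist_comm]; exact le_of_lt h1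
          exact mul_le_mul hBn this (norm_nonneg _) (Nat.cast_nonneg n)
  have h4 : ((n : ℝ) + 1) * δ ≤ ε / 2 := by
    have : δ ≤ ε / (2 * (n + 1)) := min_le_left _ _
    have hn : (0:ℝ) < (n : ℝ) + 1 := by positivity
    calc ((n : ℝ) + 1) * δ ≤ ((n : ℝ) + 1) * (ε / (2 * (n + 1))) := by nlinarith
      _ = ε / 2 := by field_simp
  calc dist p.2 (B p.1) ≤ dist p.2 q.2 + dist q.2 w + dist w (B p.1) := dist_triangle4 _ _ _ _
    _ < δ + ε / 4 + (n : ℝ) * δ := by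
        have := hδ; linarith [h2, hw, h3]
    _ ≤ ε / 2 + ε / 4 := by linarith [h4]
    _ < ε := by linarith

lemma zero_mem_E (n : ℕ) (y : X) : (0 : X) ∈ E 𝔅 n y :=
  ⟨0, zero_mem _, by simp, by simp⟩

lemma exists_box
    (hsstB : ∀ x y : X, x ≠ 0 → y ≠ 0 → ∃ B ∈ 𝔅, B x = y ∨ B y = x) :
    ∃ (n : ℕ) (y₀ z₀ : X) (r : ℝ), 0 < r ∧
      ball y₀ r ×ˢ ball z₀ r ⊆ H 𝔅 n := by
  classical
  set F : ℕ × Bool → Set (X × X) := fun i =>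
    if i.2 then H 𝔅 i.1 else Prod.swap ⁻¹' H 𝔅 i.1 with hF
  have hFc : ∀ i, IsClosed (F i) := by
    rintro ⟨n, b⟩
    cases b <;> simp only [hF, if_true, if_false, Bool.false_eq_true]
    · exact (isClosed_H 𝔅 n).preimage continuous_swap
    · exact isClosed_H 𝔅 n
  have hFu : (⋃ i, F i) = univ := by
    refine eq_univ_of_forall fun p => mem_iUnion.2 ?_
    by_cases h1 : p.1 = 0
    · refine ⟨(0, false), ?_⟩
      simp only [hF, if_false, Bool.false_eq_true, Set.mem_preimage]
      show (p.2, p.1).2 ∈ closure (E 𝔅 0 (p.2, p.1).1)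
      exact subset_closure (h1 ▸ zero_mem_E 𝔅 0 p.2)
    by_cases h2 : p.2 = 0
    · refine ⟨(0, true), ?_⟩
      simp only [hF, if_true]
      show p.2 ∈ closure (E 𝔅 0 p.1)
      exact subset_closure (h2 ▸ zero_mem_E 𝔅 0 p.1)
    obtain ⟨B, hB, hcase⟩ := hsstB p.1 p.2 h1 h2
    rcases hcase with hc | hc
    · exact ⟨(⌈‖B‖⌉₊, true), by
        simp only [hF, if_true]
        exact subset_closure ⟨B, hB, Nat.le_ceil _, hc⟩⟩
    · exact ⟨(⌈‖B‖⌉₊, false), by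
        simp only [hF, if_false, Bool.false_eq_true, Set.mem_preimage]
        exact subset_closure ⟨B, hB, Nat.le_ceil _, hc⟩⟩
  obtain ⟨⟨n, b⟩, hi⟩ := nonempty_interior_of_iUnion_of_closed hFc hFu
  have hmain : ∃ p : X × X, p ∈ interior (H 𝔅 n) := by
    cases b
    · obtain ⟨p, hp⟩ := hi
      simp only [hF, if_false, Bool.false_eq_true] at hp
      have hpre : Prod.swap ⁻¹' H 𝔅 n = (Homeomorph.prodComm X X) ⁻¹' H 𝔅 n := rfl
      rw [hpre, ← Homeomorph.preimage_interior] at hp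
      exact ⟨Prod.swap p, hp⟩
    · obtain ⟨p, hp⟩ := hi
      simpa only [hF, if_true] using ⟨p, hp⟩
  obtain ⟨p₀, hp₀⟩ := hmain
  obtain ⟨r, hr, hball⟩ := Metric.isOpen_iff.1 isOpen_interior p₀ hp₀
  refine ⟨n, p₀.1, p₀.2, r, hr, ?_⟩
  intro q hq
  apply interior_subset (hball ?_)
  rw [← ball_prod_same]
  exact hq

lemma approx {n : ℕ} {y₀ z₀ : X} {r : ℝ}
    (hbox : ball y₀ r ×ˢ ball z₀ r ⊆ H 𝔅 n) :
    ∀ y ∈ ball y₀ r, ∀ u : X, ‖u‖ < r → ∀ ε > 0,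
      ∃ B ∈ 𝔅, ‖B‖ ≤ (n : ℝ) ∧ ‖B y - u‖ < ε := by
  intro y hy u hu ε hε
  have hmem : ∀ s : X, ‖s‖ < r → (y, z₀ + s) ∈ H 𝔅 n := by
    intro s hs
    apply hbox
    refine ⟨hy, ?_⟩
    rw [mem_ball, dist_eq_norm]
    simpa using hs
  have h1 := (hmem u hu : (z₀ + u) ∈ closure (E 𝔅 n y))
  have h2 := (hmem (-u) (by simpa using hu) : (z₀ + -u) ∈ closure (E 𝔅 n y))
  obtain ⟨w₁, ⟨B₁, hB₁, hB₁n, hB₁y⟩, hw₁⟩ := Metric.mem_closure_iff.1 h1 ε hε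
  obtain ⟨w₂, ⟨B₂, hB₂, hB₂n, hB₂y⟩, hw₂⟩ := Metric.mem_closure_iff.1 h2 ε hε
  simp only at hB₁y hB₂y hw₁ hw₂
  refine ⟨(2⁻¹ : ℂ) • (B₁ - B₂), SMulMemClass.smul_mem _ (sub_mem hB₁ hB₂), ?_, ?_⟩
  · rw [norm_smul ((2:ℂ)⁻¹) (B₁ - B₂)]
    have h2n : ‖(2⁻¹ : ℂ)‖ = (2⁻¹ : ℝ) := by norm_num
    rw [h2n]
    calc (2⁻¹ : ℝ) * ‖B₁ - B₂‖ ≤ 2⁻¹ * (‖B₁‖ + ‖B₂‖) := by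
          have := norm_sub_le B₁ B₂; linarith
      _ ≤ (n : ℝ) := by linarith
  · have key : ((2⁻¹ : ℂ) • (B₁ - B₂)) y - u
        = (2⁻¹ : ℂ) • ((B₁ y - (z₀ + u)) - (B₂ y - (z₀ + -u))) := by
      rw [ContinuousLinearMap.smul_apply, ContinuousLinearMap.sub_apply]
      module
    rw [key, norm_smul ((2:ℂ)⁻¹) _]
    have h12 : ‖(2⁻¹ : ℂ)‖ = (2⁻¹ : ℝ) := by norm_num
    rw [h12]
    have : ‖(B₁ y - (z₀ + u)) - (B₂ y - (z₀ + -u))‖ < 2 * ε := by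
      calc ‖(B₁ y - (z₀ + u)) - (B₂ y - (z₀ + -u))‖
          ≤ ‖B₁ y - (z₀ + u)‖ + ‖B₂ y - (z₀ + -u)‖ := norm_sub_le _ _
        _ < 2 * ε := by
            rw [← hB₁y] at hw₁; rw [← hB₂y] at hw₂
            rw [dist_eq_norm] at hw₁ hw₂
            rw [norm_sub_rev] at hw₁ hw₂
            linarith
    linarith
lemma step {n : ℕ} {y₀ z₀ : X} {r : ℝ} (hr : 0 < r)
    (hbox : ball y₀ r ×ˢ ball z₀ r ⊆ H 𝔅 n) :
    ∀ y ∈ ball y₀ r, ∀ w : X,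
      ∃ B ∈ 𝔅, ‖B‖ ≤ 2 * n / r * ‖w‖ ∧ ‖w - B y‖ ≤ ‖w‖ / 2 := by
  intro y hy w
  by_cases hw : w = 0
  · exact ⟨0, zero_mem _, by simp [hw], by simp [hw]⟩
  have hwn : 0 < ‖w‖ := norm_pos_iff.2 hw
  set c : ℝ := r / (2 * ‖w‖) with hc
  have hcpos : 0 < c := by positivity
  have hnc : ‖((c : ℂ))‖ = c := by
    rw [Complex.norm_real, Real.norm_eq_abs, abs_of_pos hcpos]
  have hcu : ‖(c : ℂ) • w‖ = r / 2 := by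
    rw [norm_smul, hnc, hc]
    field_simp
  obtain ⟨B', hB', hB'n, hB'y⟩ := approx 𝔅 hbox y hy ((c : ℂ) • w)
    (by rw [hcu]; linarith) (r/4) (by positivity)
  have hncinv : ‖((c : ℂ))⁻¹‖ = c⁻¹ := by
    rw [norm_inv, hnc]
  have hcinv : c⁻¹ = 2 * ‖w‖ / r := by rw [hc]; field_simp
  refine ⟨((c : ℂ))⁻¹ • B', SMulMemClass.smul_mem _ hB', ?_, ?_⟩
  · rw [norm_smul ((c:ℂ))⁻¹ B', hncinv, hcinv]
    calc 2 * ‖w‖ / r * ‖B'‖ ≤ 2 * ‖w‖ / r * n := by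
          apply mul_le_mul_of_nonneg_left hB'n; positivity
      _ = 2 * n / r * ‖w‖ := by ring
  · have hc0 : ((c : ℂ)) ≠ 0 := by
      simpa using ne_of_gt hcpos
    have key : w - (((c : ℂ))⁻¹ • B') y = ((c : ℂ))⁻¹ • ((c : ℂ) • w - B' y) := by
      rw [ContinuousLinearMap.smul_apply, smul_sub, smul_smul,
        inv_mul_cancel₀ hc0, one_smul]
    rw [key, norm_smul ((c:ℂ))⁻¹ _, hncinv]
    have h1 : ‖(c : ℂ) • w - B' y‖ ≤ r / 4 := by
      rw [norm_sub_rev]; linarith [hB'y]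
    calc c⁻¹ * ‖(c : ℂ) • w - B' y‖ ≤ c⁻¹ * (r / 4) := by
          apply mul_le_mul_of_nonneg_left h1 (le_of_lt (inv_pos.2 hcpos))
      _ = ‖w‖ / 2 := by rw [hcinv]; field_simp; ring

lemma reach (hcl : IsClosed (𝔅 : Set (X →L[ℂ] X)))
    {n : ℕ} {y₀ z₀ : X} {r : ℝ} (hr : 0 < r)
    (hbox : ball y₀ r ×ˢ ball z₀ r ⊆ H 𝔅 n) :
    ∀ y ∈ ball y₀ r, ∀ v : X, ∃ B ∈ 𝔅, B y = v ∧ ‖B‖ ≤ 4 * n / r * ‖v‖ := by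
  intro y hy v
  classical
  have hstep : ∀ w : X, ∃ B : X →L[ℂ] X,
      B ∈ 𝔅 ∧ ‖B‖ ≤ 2 * n / r * ‖w‖ ∧ ‖w - B y‖ ≤ ‖w‖ / 2 := by
    intro w
    obtain ⟨B, hB, h1, h2⟩ := step 𝔅 hr hbox y hy w
    exact ⟨B, hB, h1, h2⟩
  choose F hF1 hF2 hF3 using hstep
  -- the sequence of residuals
  let g : ℕ → X := fun k => Nat.rec v (fun _ wk => wk - F wk y) k
  have hg0 : g 0 = v := rfl
  have hgs : ∀ k, g (k + 1) = g k - F (g k) y := fun k => rfl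
  have hgnorm : ∀ k, ‖g k‖ ≤ ‖v‖ / 2 ^ k := by
    intro k
    induction k with
    | zero => simp [hg0]
    | succ k ih =>
        rw [hgs k]
        calc ‖g k - F (g k) y‖ ≤ ‖g k‖ / 2 := hF3 (g k)
          _ ≤ ‖v‖ / 2 ^ k / 2 := by linarith
          _ = ‖v‖ / 2 ^ (k + 1) := by rw [pow_succ]; ring
  have hBnorm : ∀ k, ‖F (g k)‖ ≤ (2 * n / r * ‖v‖) * (1 / 2) ^ k := by
    intro k
    calc ‖F (g k)‖ ≤ 2 * n / r * ‖g k‖ := hF2 (g k)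
      _ ≤ 2 * n / r * (‖v‖ / 2 ^ k) := by
          apply mul_le_mul_of_nonneg_left (hgnorm k); positivity
      _ = (2 * n / r * ‖v‖) * (1 / 2) ^ k := by
          rw [div_pow, one_pow]; ring
  have hsum : Summable (fun k => F (g k)) := by
    apply Summable.of_norm_bounded (summable_geometric_two.mul_left (2 * n / r * ‖v‖)) hBnorm
  set S : X →L[ℂ] X := ∑' k, F (g k) with hS
  have hhs : HasSum (fun k => F (g k)) S := hsum.hasSum
  have htend : Filter.Tendsto (fun K => ∑ k ∈ Finset.range K, F (g k))
      Filter.atTop (nhds S) := hhs.tendsto_sum_nat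
  have hSmem : S ∈ 𝔅 := by
    refine hcl.mem_of_tendsto htend ?_
    exact Filter.Eventually.of_forall fun K => sum_mem fun k _ => hF1 (g k)
  have hpartial : ∀ K, ∑ k ∈ Finset.range K, F (g k) y = v - g K := by
    intro K
    induction K with
    | zero => simp [hg0]
    | succ K ih =>
        rw [Finset.sum_range_succ, ih, hgs K]
        abel
  have hgtend : Filter.Tendsto g Filter.atTop (nhds 0) := by
    apply squeeze_zero_norm hgnorm
    have : Filter.Tendsto (fun k : ℕ => ‖v‖ * (1 / 2) ^ k) Filter.atTop (nhds 0) := by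
      have h2 : Filter.Tendsto (fun k : ℕ => ((1:ℝ)/2) ^ k) Filter.atTop (nhds 0) :=
        tendsto_pow_atTop_nhds_zero_of_lt_one (by norm_num) (by norm_num)
      simpa using h2.const_mul ‖v‖
    apply this.congr
    intro k
    rw [div_pow, one_pow]
    ring
  have happly : HasSum (fun k => F (g k) y) (S y) := by
    have := hhs.mapL (ContinuousLinearMap.apply ℂ X y)
    simpa using this
  have hSy : S y = v := by
    have h1 : Filter.Tendsto (fun K => ∑ k ∈ Finset.range K, F (g k) y)
        Filter.atTop (nhds (S y)) := happly.tendsto_sum_nat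
    have h2 : Filter.Tendsto (fun K => v - g K) Filter.atTop (nhds v) := by
      simpa using (tendsto_const_nhds (x := v)).sub hgtend
    rw [show (fun K => ∑ k ∈ Finset.range K, F (g k) y) = fun K => v - g K from
      funext hpartial] at h1
    exact tendsto_nhds_unique h1 h2
  refine ⟨S, hSmem, hSy, ?_⟩
  have hnorms : Summable (fun k => ‖F (g k)‖) :=
    Summable.of_nonneg_of_le (fun k => norm_nonneg _) hBnorm
      (summable_geometric_two.mul_left (2 * n / r * ‖v‖))
  calc ‖S‖ ≤ ∑' k, ‖F (g k)‖ := norm_tsum_le_tsum_norm hnorms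
    _ ≤ ∑' k : ℕ, (2 * n / r * ‖v‖) * (1 / 2) ^ k := by
        apply Summable.tsum_le_tsum hBnorm hnorms (summable_geometric_two.mul_left _)
    _ = (2 * n / r * ‖v‖) * 2 := by
        rw [tsum_mul_left, tsum_geometric_two]
    _ = 4 * n / r * ‖v‖ := by ring

lemma exists_uniform (hcl : IsClosed (𝔅 : Set (X →L[ℂ] X)))
    (hsstB : ∀ x y : X, x ≠ 0 → y ≠ 0 → ∃ B ∈ 𝔅, B x = y ∨ B y = x) :
    ∃ (C : ℝ) (y₀ : X) (r : ℝ), 0 < r ∧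
      ∀ y ∈ ball y₀ r, ∀ v : X, ∃ B ∈ 𝔅, B y = v ∧ ‖B‖ ≤ C * ‖v‖ := by
  obtain ⟨n, y₀, z₀, r, hr, hbox⟩ := exists_box 𝔅 hsstB
  exact ⟨4 * n / r, y₀, r, hr, reach 𝔅 hcl hr hbox⟩



lemma nonzero_in_ball [Nontrivial X] (y₀ : X) {r : ℝ} (hr : 0 < r) :
    ∃ z : X, z ∈ ball y₀ r ∧ z ≠ 0 := by
  by_cases h0 : y₀ = 0
  · obtain ⟨u, hu⟩ := exists_ne (0 : X)
    have hun : 0 < ‖u‖ := norm_pos_iff.2 hu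
    refine ⟨(↑(r / (2 * ‖u‖)) : ℂ) • u, ?_, ?_⟩
    · rw [h0, mem_ball, dist_eq_norm, sub_zero, norm_smul, Complex.norm_real,
        Real.norm_eq_abs, abs_of_pos (by positivity)]
      rw [div_mul_eq_mul_div, mul_comm]
      rw [mul_comm (2:ℝ) ‖u‖, ← div_div]
      calc ‖u‖ * r / ‖u‖ / 2 = r / 2 := by field_simp
        _ < r := by linarith
    · apply smul_ne_zero _ hu
      simp only [ne_eq, Complex.ofReal_eq_zero]
      positivity
  · exact ⟨y₀, mem_ball_self hr, h0⟩

lemma strict_trans [Nontrivial X] (hcl : IsClosed (𝔅 : Set (X →L[ℂ] X)))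
    (hsstB : ∀ x y : X, x ≠ 0 → y ≠ 0 → ∃ B ∈ 𝔅, B x = y ∨ B y = x)
    (htransB : ∀ x : X, x ≠ 0 → Dense {y : X | ∃ B ∈ 𝔅, B x = y}) :
    ∀ x : X, x ≠ 0 → ∀ v : X, ∃ B ∈ 𝔅, B x = v := by
  obtain ⟨C, y₀, r, hr, hreach⟩ := exists_uniform 𝔅 hcl hsstB
  intro x hx v
  have hU : IsOpen (ball y₀ r \ {0} : Set X) := isOpen_ball.sdiff isClosed_singleton
  have hUne : (ball y₀ r \ {0} : Set X).Nonempty := by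
    obtain ⟨z, hz, hz0⟩ := nonzero_in_ball y₀ hr
    exact ⟨z, hz, hz0⟩
  obtain ⟨y₁, hy₁orbit, hy₁U⟩ := (htransB x hx).exists_mem_open hU hUne
  obtain ⟨A₁, hA₁, hA₁x⟩ := hy₁orbit
  obtain ⟨B, hB, hBy, -⟩ := hreach y₁ hy₁U.1 v
  refine ⟨B * A₁, mul_mem hB hA₁, ?_⟩
  rw [ContinuousLinearMap.mul_apply, hA₁x, hBy]

lemma commutant [Nontrivial X] (hcl : IsClosed (𝔅 : Set (X →L[ℂ] X)))
    (hsstB : ∀ x y : X, x ≠ 0 → y ≠ 0 → ∃ B ∈ 𝔅, B x = y ∨ B y = x)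
    (htransB : ∀ x : X, x ≠ 0 → Dense {y : X | ∃ B ∈ 𝔅, B x = y}) :
    ∀ (φ : X →ₗ[ℂ] X), (∀ B ∈ 𝔅, ∀ v, φ (B v) = B (φ v)) →
      ∃ c : ℂ, ∀ v, φ v = c • v := by
  intro φ hφ
  obtain ⟨C, y₀, r, hr, hreach⟩ := exists_uniform 𝔅 hcl hsstB
  -- φ is bounded
  have hbound : ∀ v : X, ‖φ v‖ ≤ C * ‖φ y₀‖ * ‖v‖ := by
    intro v
    obtain ⟨B, hB, hBy, hBn⟩ := hreach y₀ (mem_ball_self hr) v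
    have : φ v = B (φ y₀) := by rw [← hBy, hφ B hB]
    rw [this]
    calc ‖B (φ y₀)‖ ≤ ‖B‖ * ‖φ y₀‖ := B.le_opNorm _
      _ ≤ C * ‖v‖ * ‖φ y₀‖ := by
          apply mul_le_mul_of_nonneg_right hBn (norm_nonneg _)
      _ = C * ‖φ y₀‖ * ‖v‖ := by ring
  set φ' : X →L[ℂ] X := φ.mkContinuous (C * ‖φ y₀‖) hbound with hφ'def
  have hφ'app : ∀ v, φ' v = φ v := fun v => rfl
  haveI : Nontrivial (X →L[ℂ] X) := by
    obtain ⟨u, hu⟩ := exists_ne (0 : X)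
    refine ⟨1, 0, fun h => hu ?_⟩
    have := congrArg (fun T : X →L[ℂ] X => T u) h
    simpa using this
  obtain ⟨lam, hlam⟩ := spectrum.nonempty φ'
  rw [spectrum.mem_iff] at hlam
  set ψ : X →L[ℂ] X := algebraMap ℂ (X →L[ℂ] X) lam - φ' with hψdef
  have hψapp : ∀ v, ψ v = lam • v - φ v := by
    intro v
    rw [hψdef, ContinuousLinearMap.sub_apply, Algebra.algebraMap_eq_smul_one,
      ContinuousLinearMap.smul_apply, ContinuousLinearMap.one_apply, hφ'app]
  have hψcomm : ∀ B ∈ 𝔅, ∀ v, ψ (B v) = B (ψ v) := by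
    intro B hB v
    rw [hψapp, hψapp, map_sub, map_smul, hφ B hB]
  by_cases hψ0 : ψ = 0
  · refine ⟨lam, fun v => ?_⟩
    have := hψapp v
    rw [hψ0] at this
    simp only [ContinuousLinearMap.zero_apply] at this
    exact (sub_eq_zero.mp this.symm).symm
  · exfalso
    apply hlam
    rw [ContinuousLinearMap.isUnit_iff_bijective]
    constructor
    · -- injective
      have hker : ∀ u : X, ψ u = 0 → u = 0 := by
        intro u hu
        by_contra hu0
        apply hψ0
        ext v
        obtain ⟨B, hB, hBu⟩ := strict_trans 𝔅 hcl hsstB htransB u hu0 v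
        rw [ContinuousLinearMap.zero_apply, ← hBu, hψcomm B hB, hu, map_zero]
      intro a b hab
      have h1 : ψ (a - b) = 0 := by rw [map_sub, hab, sub_self]
      have h2 := hker _ h1
      exact sub_eq_zero.mp h2
    · -- surjective
      have hex : ∃ u₀ : X, ψ u₀ ≠ 0 := by
        by_contra h
        push_neg at h
        exact hψ0 (ContinuousLinearMap.ext fun v => by rw [h v]; rfl)
      obtain ⟨u₀, hu₀⟩ := hex
      intro v
      obtain ⟨B, hB, hBw⟩ := strict_trans 𝔅 hcl hsstB htransB (ψ u₀) hu₀ v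
      exact ⟨B u₀, by rw [hψcomm B hB, hBw]⟩

def Au (A : X →L[ℂ] X) : Prop := ∃ c : ℂ, ∃ B ∈ 𝔅, A = c • (1 : X →L[ℂ] X) + B

lemma Au_of_mem {A : X →L[ℂ] X} (hA : A ∈ 𝔅) : Au 𝔅 A := ⟨0, A, hA, by simp⟩

lemma Au_sub {A A' : X →L[ℂ] X} (h : Au 𝔅 A) (h' : Au 𝔅 A') : Au 𝔅 (A - A') := by
  obtain ⟨c, B, hB, rfl⟩ := h; obtain ⟨c', B', hB', rfl⟩ := h'
  exact ⟨c - c', B - B', sub_mem hB hB', by module⟩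

lemma mul_Au_mem {C A : X →L[ℂ] X} (hC : C ∈ 𝔅) (h : Au 𝔅 A) : C * A ∈ 𝔅 := by
  obtain ⟨c, B, hB, rfl⟩ := h
  have : C * (c • 1 + B) = c • C + C * B := by
    rw [mul_add, mul_smul_comm, mul_one]
  rw [this]
  exact add_mem (SMulMemClass.smul_mem c hC) (mul_mem hC hB)


lemma interp [Nontrivial X] (hcl : IsClosed (𝔅 : Set (X →L[ℂ] X)))
    (hsstB : ∀ x y : X, x ≠ 0 → y ≠ 0 → ∃ B ∈ 𝔅, B x = y ∨ B y = x)
    (htransB : ∀ x : X, x ≠ 0 → Dense {y : X | ∃ B ∈ 𝔅, B x = y}) :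
    ∀ (k : ℕ) (b : Fin k → X), LinearIndependent ℂ b → ∀ t : Fin k → X,
      ∃ B ∈ 𝔅, ∀ j, B (b j) = t j := by
  intro k
  induction k with
  | zero => exact fun b hb t => ⟨0, zero_mem _, fun j => j.elim0⟩
  | succ k ih =>
    -- separation at the last position
    have sep : ∀ (b : Fin (k+1) → X), LinearIndependent ℂ b →
        ∃ A : X →L[ℂ] X, Au 𝔅 A ∧ (∀ j : Fin k, A (b j.castSucc) = 0) ∧
          A (b (Fin.last k)) ≠ 0 := by
      intro b hb
      by_contra hcon
      push_neg at hcon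
      have W : ∀ A A' : X →L[ℂ] X, Au 𝔅 A → Au 𝔅 A' →
          (∀ j : Fin k, A (b j.castSucc) = A' (b j.castSucc)) →
          A (b (Fin.last k)) = A' (b (Fin.last k)) := by
        intro A A' hA hA' hagree
        have h1 := hcon (A - A') (Au_sub 𝔅 hA hA')
          (fun j => by rw [ContinuousLinearMap.sub_apply, hagree j, sub_self])
        rw [ContinuousLinearMap.sub_apply] at h1
        exact sub_eq_zero.mp h1
      have hbk : LinearIndependent ℂ (fun j : Fin k => b j.castSucc) :=
        hb.comp Fin.castSucc (Fin.castSucc_injective k)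
      have hchoice : ∀ (i : Fin k) (v : X), ∃ B : X →L[ℂ] X, B ∈ 𝔅 ∧
          ∀ j : Fin k, B (b j.castSucc) = if j = i then v else 0 := by
        intro i v
        obtain ⟨B, hB, hBj⟩ := ih (fun j => b j.castSucc) hbk
          (fun j => if j = i then v else 0)
        exact ⟨B, hB, hBj⟩
      choose G hG1 hG2 using hchoice
      -- each φ_i is ℂ-linear and commutes with 𝔅, hence scalar
      have keyW : ∀ (i : Fin k) (v : X) (B : X →L[ℂ] X), B ∈ 𝔅 →
          (∀ j : Fin k, B (b j.castSucc) = if j = i then v else 0) →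
          B (b (Fin.last k)) = G i v (b (Fin.last k)) := by
        intro i v B hB hall
        exact W B (G i v) (Au_of_mem 𝔅 hB) (Au_of_mem 𝔅 (hG1 i v))
          (fun j => by rw [hall j, hG2 i v j])
      have hscal : ∀ i : Fin k, ∃ c : ℂ, ∀ v, G i v (b (Fin.last k)) = c • v := by
        intro i
        set φ : X →ₗ[ℂ] X :=
          { toFun := fun v => G i v (b (Fin.last k))
            map_add' := by
              intro v w
              have := keyW i (v + w) (G i v + G i w)
                (add_mem (hG1 i v) (hG1 i w))
                (fun j => by
                  rw [ContinuousLinearMap.add_apply, hG2 i v j, hG2 i w j]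
                  by_cases hj : j = i <;> simp [hj])
              show G i (v + w) (b (Fin.last k))
                  = G i v (b (Fin.last k)) + G i w (b (Fin.last k))
              rw [← this, ContinuousLinearMap.add_apply]
            map_smul' := by
              intro a v
              have := keyW i (a • v) (a • G i v)
                (SMulMemClass.smul_mem a (hG1 i v))
                (fun j => by
                  rw [ContinuousLinearMap.smul_apply, hG2 i v j]
                  by_cases hj : j = i <;> simp [hj])
              show G i (a • v) (b (Fin.last k)) = RingHom.id ℂ a • G i v (b (Fin.last k))
              rw [← this, ContinuousLinearMap.smul_apply]
              rfl } with hφdef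
        have hφcomm : ∀ B ∈ 𝔅, ∀ v, φ (B v) = B (φ v) := by
          intro B hB v
          have := keyW i (B v) (B * G i v) (mul_mem hB (hG1 i v))
            (fun j => by
              rw [ContinuousLinearMap.mul_apply, hG2 i v j]
              by_cases hj : j = i <;> simp [hj])
          have h2 : φ (B v) = G i (B v) (b (Fin.last k)) := rfl
          rw [h2, ← this, ContinuousLinearMap.mul_apply]
          rfl
        obtain ⟨c, hc⟩ := commutant 𝔅 hcl hsstB htransB φ hφcomm
        exact ⟨c, fun v => hc v⟩
      choose c hc using hscal
      -- contradiction with linear independence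
      set A1 : X →L[ℂ] X := 1 - ∑ i : Fin k, G i (b i.castSucc) with hA1
      have hA1Au : Au 𝔅 A1 := by
        refine ⟨1, -∑ i : Fin k, G i (b i.castSucc),
          neg_mem (sum_mem fun i _ => hG1 i _), ?_⟩
        rw [hA1, one_smul]
        abel
      have hA1kill : ∀ j : Fin k, A1 (b j.castSucc) = 0 := by
        intro j
        rw [hA1, ContinuousLinearMap.sub_apply, ContinuousLinearMap.one_apply,
          ContinuousLinearMap.sum_apply]
        have : ∀ i : Fin k, G i (b i.castSucc) (b j.castSucc)
            = if j = i then b i.castSucc else 0 := fun i => hG2 i _ j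
        rw [Finset.sum_congr rfl (fun i _ => this i)]
        rw [Finset.sum_ite_eq univ j (fun i => b i.castSucc)]
        simp
      have hlast := hcon A1 hA1Au hA1kill
      rw [hA1, ContinuousLinearMap.sub_apply, ContinuousLinearMap.one_apply,
        ContinuousLinearMap.sum_apply] at hlast
      have hsum : ∑ i : Fin k, G i (b i.castSucc) (b (Fin.last k))
          = ∑ i : Fin k, c i • b i.castSucc := by
        exact Finset.sum_congr rfl (fun i _ => hc i _)
      rw [hsum] at hlast
      have hmem : b (Fin.last k) ∈ Submodule.span ℂ (Set.range (Fin.init b)) := by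
        have : b (Fin.last k) = ∑ i : Fin k, c i • b i.castSucc :=
          sub_eq_zero.mp hlast
        rw [this]
        refine Submodule.sum_mem _ fun i _ => Submodule.smul_mem _ _ ?_
        exact Submodule.subset_span ⟨i, rfl⟩
      rw [← Fin.snoc_init_self b, linearIndependent_fin_snoc] at hb
      exact hb.2 hmem
    -- separation at arbitrary position
    have sep' : ∀ (b : Fin (k+1) → X), LinearIndependent ℂ b → ∀ j₀ : Fin (k+1),
        ∃ A : X →L[ℂ] X, Au 𝔅 A ∧ A (b j₀) ≠ 0 ∧ ∀ m, m ≠ j₀ → A (b m) = 0 := by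
      intro b hb j₀
      set e := Equiv.swap j₀ (Fin.last k) with he
      have hb' : LinearIndependent ℂ (b ∘ e) := hb.comp e e.injective
      obtain ⟨A, hA, hkill, hne⟩ := sep (b ∘ e) hb'
      refine ⟨A, hA, ?_, ?_⟩
      · have h1 : (b ∘ e) (Fin.last k) = b j₀ := by
          simp [he, Equiv.swap_apply_right]
        rwa [h1] at hne
      · intro m hm
        have h1 : e m ≠ Fin.last k := by
          intro h
          apply hm
          have : m = e (Fin.last k) := by
            rw [← h]; simp [he]
          rw [this, he, Equiv.swap_apply_right]
        obtain ⟨j, hj⟩ := Fin.exists_castSucc_eq.mpr h1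
        have h2 := hkill j
        have h3 : (b ∘ e) j.castSucc = b m := by
          have : e j.castSucc = m := by
            rw [hj]
            simp [he]
          simp only [Function.comp_apply, this]
        rwa [h3] at h2
    -- assemble
    intro b hb t
    have hstepj : ∀ j₀ : Fin (k+1), ∃ Bj : X →L[ℂ] X, Bj ∈ 𝔅 ∧
        Bj (b j₀) = t j₀ ∧ ∀ m, m ≠ j₀ → Bj (b m) = 0 := by
      intro j₀
      obtain ⟨A, hA, hne, hkill⟩ := sep' b hb j₀
      obtain ⟨Cj, hCj, hCjw⟩ := strict_trans 𝔅 hcl hsstB htransB (A (b j₀)) hne (t j₀)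
      refine ⟨Cj * A, mul_Au_mem 𝔅 hCj hA, ?_, ?_⟩
      · rw [ContinuousLinearMap.mul_apply, hCjw]
      · intro m hm
        rw [ContinuousLinearMap.mul_apply, hkill m hm, map_zero]
    choose Bj hBj1 hBj2 hBj3 using hstepj
    refine ⟨∑ j, Bj j, sum_mem fun j _ => hBj1 j, ?_⟩
    intro j
    rw [ContinuousLinearMap.sum_apply]
    rw [Finset.sum_eq_single j (fun j' _ hne => hBj3 j' j (Ne.symm hne))
      (fun h => absurd (Finset.mem_univ j) h)]
    exact hBj2 j

end SST12

theorem stmt_12 {X : Type*} [NormedAddCommGroup X] [NormedSpace ℂ X] [CompleteSpace X]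
    (𝔄 : NonUnitalSubalgebra ℂ (X →L[ℂ] X))
    (hsst : ∀ x y : X, x ≠ 0 → y ≠ 0 → ∃ A ∈ 𝔄, A x = y ∨ A y = x)
    (htrans : ∀ x : X, x ≠ 0 → Dense {y : X | ∃ A ∈ 𝔄, A x = y}) :
    ∀ (T : X →L[ℂ] X) (ε : ℝ), 0 < ε →
      ∀ (m : ℕ) (x : Fin m → X) (f : Fin m → (X →L[ℂ] ℂ)),
        ∃ A ∈ 𝔄, ∀ i, ‖f i (T (x i) - A (x i))‖ < ε := by
  intro T ε hε m x f
  rcases subsingleton_or_nontrivial X with hX | hX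
  · refine ⟨0, zero_mem _, fun i => ?_⟩
    have h0 : T (x i) - (0 : X →L[ℂ] X) (x i) = 0 := Subsingleton.elim _ _
    rw [h0, map_zero, norm_zero]
    exact hε
  · set 𝔅 : NonUnitalSubalgebra ℂ (X →L[ℂ] X) := 𝔄.topologicalClosure with h𝔅
    have hsub : (𝔄 : Set (X →L[ℂ] X)) ⊆ (𝔅 : Set (X →L[ℂ] X)) :=
      𝔄.le_topologicalClosure
    have hcl : IsClosed (𝔅 : Set (X →L[ℂ] X)) := 𝔄.isClosed_topologicalClosure
    have hsstB : ∀ x y : X, x ≠ 0 → y ≠ 0 → ∃ B ∈ 𝔅, B x = y ∨ B y = x := by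
      intro a b ha hb
      obtain ⟨A, hA, h⟩ := hsst a b ha hb
      exact ⟨A, hsub hA, h⟩
    have htransB : ∀ x : X, x ≠ 0 → Dense {y : X | ∃ B ∈ 𝔅, B x = y} := by
      intro a ha
      refine (htrans a ha).mono ?_
      rintro y ⟨A, hA, h⟩
      exact ⟨A, hsub hA, h⟩
    -- finite-dimensional span of the x i
    set s : Submodule ℂ X := Submodule.span ℂ (Set.range x) with hs
    haveI : FiniteDimensional ℂ s := FiniteDimensional.span_of_finite ℂ (Set.finite_range x)
    set b : Module.Basis (Fin (Module.finrank ℂ s)) ℂ s := Module.finBasis ℂ s with hb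
    set β : Fin (Module.finrank ℂ s) → X := fun j => (b j : X) with hβ
    have hβli : LinearIndependent ℂ β :=
      b.linearIndependent.map' s.subtype (Submodule.ker_subtype s)
    obtain ⟨B, hB, hBβ⟩ := SST12.interp 𝔅 hcl hsstB htransB _ β hβli (fun j => T (β j))
    -- B agrees with T on s
    have hspan : Submodule.span ℂ (Set.range β) = s := by
      have h1 : Set.range β = s.subtype '' Set.range b := by
        rw [← Set.range_comp]
        rfl
      rw [h1, Submodule.span_image, b.span_eq, Submodule.map_subtype_top]
    have hagree : ∀ v ∈ s, B v = T v := by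
      have hle : s ≤ LinearMap.ker ((B : X →ₗ[ℂ] X) - (T : X →ₗ[ℂ] X)) := by
        rw [← hspan]
        apply Submodule.span_le.mpr
        rintro _ ⟨j, rfl⟩
        simp only [SetLike.mem_coe]
        rw [LinearMap.mem_ker, LinearMap.sub_apply]
        simp only [ContinuousLinearMap.coe_coe]
        rw [hBβ j, sub_self]
      intro v hv
      have := hle hv
      rw [LinearMap.mem_ker, LinearMap.sub_apply] at this
      simp only [ContinuousLinearMap.coe_coe] at this
      exact sub_eq_zero.mp this
    have hBx : ∀ i, B (x i) = T (x i) := fun i =>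
      hagree (x i) (Submodule.subset_span ⟨i, rfl⟩)
    -- approximate B by an element of 𝔄
    set Sc : ℝ := ∑ i, ‖f i‖ * ‖x i‖ with hSc
    have hSc0 : 0 ≤ Sc := Finset.sum_nonneg fun i _ => by positivity
    have hδ : 0 < ε / (1 + Sc) := by positivity
    have hBc : B ∈ closure (𝔄 : Set (X →L[ℂ] X)) := hB
    obtain ⟨A, hA, hdist⟩ := Metric.mem_closure_iff.1 hBc _ hδ
    refine ⟨A, hA, fun i => ?_⟩
    have h1 : T (x i) - A (x i) = (B - A) (x i) := by
      rw [ContinuousLinearMap.sub_apply, hBx i]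
    rw [h1]
    calc ‖f i ((B - A) (x i))‖ ≤ ‖f i‖ * ‖(B - A) (x i)‖ := (f i).le_opNorm _
      _ ≤ ‖f i‖ * (‖B - A‖ * ‖x i‖) := by
          apply mul_le_mul_of_nonneg_left ((B - A).le_opNorm _) (norm_nonneg _)
      _ = (‖f i‖ * ‖x i‖) * ‖B - A‖ := by ring
      _ ≤ (1 + Sc) * ‖B - A‖ := by
          apply mul_le_mul_of_nonneg_right _ (norm_nonneg _)
          have : ‖f i‖ * ‖x i‖ ≤ Sc :=
            Finset.single_le_sum (f := fun i => ‖f i‖ * ‖x i‖)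
              (fun i _ => by positivity) (Finset.mem_univ i)
          linarith
      _ < (1 + Sc) * (ε / (1 + Sc)) := by
          apply mul_lt_mul_of_pos_left _ (by linarith)
          rw [← dist_eq_norm]
          exact hdist
      _ = ε := by field_simp
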